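/- For any u, λ ∈ ℝ^m, the following are equivalent: (i) λ ∈ Δ_m and ⟨u, λ⟩ = max_{1≤i≤m} u_i; (ii) λ is the unique point of Δ_m closest in Euclidean norm to λ + u. -/
import Mathlib

open RealInnerProductSpace


/-- The unit simplex `Δ_m`, viewed inside the Euclidean space `ℝ^m`. -/
def simplexSetE (m : ℕ) : Set (EuclideanSpace ℝ (Fin m)) :=
  {w | (∀ i, 0 ≤ w i) ∧ ∑ i, w i = 1}

lemma simplexSetE_convex (m : ℕ) : Convex ℝ (simplexSetE m) := by
  intro x hx y hy a b ha hb hab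
  obtain ⟨hx1, hx2⟩ := hx
  obtain ⟨hy1, hy2⟩ := hy
  constructor
  · intro i
    have : (a • x + b • y) i = a * x i + b * y i := by
      simp [PiLp.add_apply, PiLp.smul_apply, smul_eq_mul]
    rw [this]
    exact add_nonneg (mul_nonneg ha (hx1 i)) (mul_nonneg hb (hy1 i))
  · have : ∀ i, (a • x + b • y) i = a * x i + b * y i := by
      intro i; simp [PiLp.add_apply, PiLp.smul_apply, smul_eq_mul]
    simp only [this, Finset.sum_add_distrib, ← Finset.mul_sum, hx2, hy2]
    linarith

lemma inner_eucl {m : ℕ} (x y : EuclideanSpace ℝ (Fin m)) :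
    ⟪x, y⟫ = ∑ i, x i * y i := by
  simp [PiLp.inner_apply, RCLike.inner_apply, mul_comm]

/-- `λ ∈ Δ_m` with `⟨u, λ⟩ = max_i u_i` if and only if `λ` is the
(unique) Euclidean nearest point of `Δ_m` to `λ + u`. -/
theorem stmt_13 (m : ℕ) (hm : 0 < m) (u lam : EuclideanSpace ℝ (Fin m)) :
    (lam ∈ simplexSetE m ∧ ∑ i, u i * lam i = ⨆ i, u i) ↔
    (lam ∈ simplexSetE m ∧
      ∀ q ∈ simplexSetE m, ‖lam + u - lam‖ ≤ ‖lam + u - q‖) := by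
  haveI : Nonempty (Fin m) := ⟨⟨0, hm⟩⟩
  have hrange : BddAbove (Set.range u) := (Set.finite_range u).bddAbove
  -- the sup is attained
  obtain ⟨i₀, hi₀⟩ : ∃ i, u i = ⨆ i, u i := exists_eq_ciSup_of_finite
  -- bound: for any w in the simplex, ∑ u i * w i ≤ sup u
  have hbound : ∀ w ∈ simplexSetE m, ∑ i, u i * w i ≤ ⨆ i, u i := by
    intro w ⟨hw1, hw2⟩
    calc ∑ i, u i * w i ≤ ∑ i, (⨆ j, u j) * w i := by
          apply Finset.sum_le_sum
          intro i _
          exact mul_le_mul_of_nonneg_right (le_ciSup hrange i) (hw1 i)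
      _ = ⨆ j, u j := by rw [← Finset.mul_sum, hw2, mul_one]
  -- the vertex e_{i₀}
  set e : EuclideanSpace ℝ (Fin m) := EuclideanSpace.single i₀ 1 with he
  have heS : e ∈ simplexSetE m := by
    constructor
    · intro i
      simp [he, EuclideanSpace.single_apply]
      split <;> norm_num
    · simp [he, EuclideanSpace.single_apply]
  have hesum : ∑ i, u i * e i = ⨆ i, u i := by
    rw [← hi₀]
    simp [he, EuclideanSpace.single_apply, mul_ite]
  constructor
  · rintro ⟨hlam, hmax⟩
    refine ⟨hlam, fun q hq => ?_⟩
    have h1 : lam + u - lam = u := by abel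
    have h2 : lam + u - q = u + (lam - q) := by abel
    rw [h1, h2]
    have hin : 0 ≤ ⟪u, lam - q⟫ := by
      rw [inner_eucl]
      have hq' := hbound q hq
      have hlq : ∀ i, (lam - q) i = lam i - q i := fun i => by simp [PiLp.sub_apply]
      calc (0:ℝ) ≤ ∑ i, u i * lam i - ∑ i, u i * q i := by rw [hmax]; linarith
        _ = ∑ i, u i * (lam - q) i := by
            simp only [hlq, mul_sub, Finset.sum_sub_distrib]
      
    have hsq : ‖u‖ ^ 2 ≤ ‖u + (lam - q)‖ ^ 2 := by
      rw [norm_add_sq_real]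
      nlinarith [sq_nonneg ‖lam - q‖]
    nlinarith [norm_nonneg u, norm_nonneg (u + (lam - q))]
  · rintro ⟨hlam, hnear⟩
    refine ⟨hlam, ?_⟩
    -- variational inequality with q_t := lam + t • (e - lam)
    have hvar : ⟪u, e - lam⟫ ≤ 0 := by
      by_contra hpos
      push_neg at hpos
      set c : ℝ := ‖e - lam‖ ^ 2 with hc
      set a : ℝ := ⟪u, e - lam⟫ with ha
      have hc0 : 0 ≤ c := sq_nonneg _
      set t : ℝ := min 1 (a / (c + 1)) with ht
      have ht0 : 0 < t := lt_min one_pos (div_pos hpos (by linarith))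
      have ht1 : t ≤ 1 := min_le_left _ _
      have hqt : lam + t • (e - lam) ∈ simplexSetE m := by
        have := simplexSetE_convex m hlam heS (a := 1 - t) (b := t)
          (by linarith) (le_of_lt ht0) (by ring)
        convert this using 1
        ext i
        simp [PiLp.add_apply, PiLp.smul_apply, PiLp.sub_apply, smul_eq_mul]
        ring
      have hkey := hnear _ hqt
      have h1 : lam + u - lam = u := by abel
      have h2 : lam + u - (lam + t • (e - lam)) = u - t • (e - lam) := by abel
      rw [h1, h2] at hkey
      have hsq : ‖u‖ ^ 2 ≤ ‖u - t • (e - lam)‖ ^ 2 := by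
        nlinarith [norm_nonneg u, norm_nonneg (u - t • (e - lam))]
      rw [norm_sub_sq_real, real_inner_smul_right, norm_smul, Real.norm_eq_abs] at hsq
      have habs : |t| = t := abs_of_pos ht0
      rw [habs] at hsq
      -- hsq : ‖u‖^2 ≤ ‖u‖^2 - 2 * (t * a) + (t * ‖e - lam‖)^2
      have hexp : (t * ‖e - lam‖) ^ 2 = t ^ 2 * c := by rw [hc]; ring
      have h3 : 2 * a ≤ t * c := by nlinarith [hsq, hexp, ht0, ha]
      have h4 : t ≤ a / (c + 1) := min_le_right _ _
      have h5 : t * (c + 1) ≤ a := (le_div_iff₀ (by linarith)).mp h4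
      nlinarith
    -- now conclude
    have h1 : ⟪u, e - lam⟫ = ∑ i, u i * e i - ∑ i, u i * lam i := by
      rw [inner_eucl]
      have hlq : ∀ i, (e - lam) i = e i - lam i := fun i => by simp [PiLp.sub_apply]
      simp only [hlq, mul_sub, Finset.sum_sub_distrib]
    rw [h1, hesum] at hvar
    have := hbound lam hlam
    linarith
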